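/- Let V ⊆ m^⊥ be a subspace such that m^⊥ is the internal direct sum of (ad f)(n) and V. Let (v_i)_{i ∈ ι} be a basis of m^⊥ (ι a finite index set) and J ⊆ ι a subset such that (v_i)_{i ∈ J} is a basis of V and (v_i)_{i ∈ ι∖J} is a basis of (ad f)(n). Let (v^i)_{i ∈ ι} be a basis of p dual to (v_i) with respect to B, i.e. B(v_i, v^j) = δ_{ij} for all i, j ∈ ι. Then (v^i)_{i ∈ J} is a basis of the centralizer g^f := ker(ad f) = {x ∈ L : [f,x] = 0}. (Lemma 2.15, in the purely even case.) -/
import Mathlib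


/-- Lemma 2.15 (purely even case).  With the Dynkin-grading setup of Setup 2.1:
if `(v_i)_{i∈ι}` is a basis of `m^⊥` such that `(v_i)_{i∈J}` is a basis of a
complement `V` of `(ad f)(n)` in `m^⊥` and `(v_i)_{i∉J}` is a basis of `(ad f)(n)`,
and `(vᵈ_i)` is the dual basis of `p` with respect to `B`, then `(vᵈ_i)_{i∈J}` is a
basis of the centralizer `g^f = ker (ad f)`. -/
theorem stmt_8 {L : Type*} [LieRing L] [LieAlgebra ℂ L] [FiniteDimensional ℂ L]
    (B : L →ₗ[ℂ] L →ₗ[ℂ] ℂ)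
    (hBsymm : ∀ x y : L, B x y = B y x)
    (hBinv : ∀ x y z : L, B ⁅x, y⁆ z = B x ⁅y, z⁆)
    (hBnd : ∀ x : L, (∀ y : L, B x y = 0) → x = 0)
    (e h f : L)
    (hhe : ⁅h, e⁆ = (2 : ℂ) • e) (hhf : ⁅h, f⁆ = (-2 : ℂ) • f) (hef : ⁅e, f⁆ = h)
    (Lg : ℤ → Submodule ℂ L)
    (hLg : ∀ j : ℤ, ∀ x ∈ Lg j, ⁅h, x⁆ = (j : ℂ) • x)
    (hinternal : DirectSum.IsInternal Lg)
    (n m p mperp : Submodule ℂ L)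
    (hn : n = ⨆ j : {j : ℤ // 1 ≤ j}, Lg j)
    (hm : m = ⨆ j : {j : ℤ // 2 ≤ j}, Lg j)
    (hp : p = ⨆ j : {j : ℤ // j ≤ 1}, Lg j)
    (hmperp : ∀ x : L, x ∈ mperp ↔ ∀ y ∈ m, B x y = 0)
    (hinj : ∀ x ∈ n, ⁅f, x⁆ = 0 → x = 0)
    (hsurj : ∀ y ∈ (⨆ j : {j : ℤ // j ≤ -1}, Lg j), ∃ x ∈ p, ⁅f, x⁆ = y)
    (V : Submodule ℂ L)
    (hsum : Submodule.map (LieAlgebra.ad ℂ L f) n ⊔ V = mperp)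
    (hdisj : Submodule.map (LieAlgebra.ad ℂ L f) n ⊓ V = ⊥)
    {ι : Type*} [Fintype ι] [DecidableEq ι]
    (v vd : ι → L) (J : Set ι)
    (hv_li : LinearIndependent ℂ v)
    (hv_span : Submodule.span ℂ (Set.range v) = mperp)
    (hvJ : ∀ i ∈ J, v i ∈ V)
    (hvJ_span : Submodule.span ℂ (v '' J) = V)
    (hvJc : ∀ i ∉ J, v i ∈ Submodule.map (LieAlgebra.ad ℂ L f) n)
    (hvJc_span : Submodule.span ℂ (v '' Jᶜ) = Submodule.map (LieAlgebra.ad ℂ L f) n)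
    (hvd_mem : ∀ i : ι, vd i ∈ p)
    (hvd_li : LinearIndependent ℂ vd)
    (hvd_span : Submodule.span ℂ (Set.range vd) = p)
    (hdual : ∀ i j : ι, B (v i) (vd j) = if i = j then 1 else 0) :
    LinearIndependent ℂ (fun i : J => vd i) ∧
      Submodule.span ℂ (vd '' J) = LinearMap.ker (LieAlgebra.ad ℂ L f) := by
  classical
  have htop : (⨆ j, Lg j) = ⊤ := hinternal.submodule_iSup_eq_top
  -- (A) every integral eigenvector of `ad h` lies in the corresponding graded piece
  have eig_mem : ∀ (c : ℤ) (y : L), ⁅h, y⁆ = (c : ℂ) • y → y ∈ Lg c := by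
    intro c y hy
    have hle : (⊤ : Submodule ℂ L) ≤ Lg c ⊔ ⨆ (j) (_ : j ≠ c), Lg j := by
      rw [← htop]
      refine iSup_le fun j => ?_
      by_cases hj : j = c
      · subst hj; exact le_sup_left
      · exact le_trans (le_iSup₂ (f := fun (j : ℤ) (_ : j ≠ c) => Lg j) j hj) le_sup_right
    obtain ⟨a, ha, b, hb, hab⟩ := Submodule.mem_sup.mp (hle (show y ∈ (⊤ : Submodule ℂ L) from Submodule.mem_top))
    have hbey : ⁅h, b⁆ = (c : ℂ) • b := by
      have hb' : b = y - a := by rw [← hab]; abel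
      rw [hb', lie_sub, hy, hLg c a ha, ← smul_sub]
    have hb1 : b ∈ Module.End.eigenspace (LieAlgebra.ad ℂ L h) (c : ℂ) :=
      Module.End.mem_eigenspace_iff.mpr (by simpa [LieAlgebra.ad_apply] using hbey)
    have hb2 : b ∈ ⨆ (μ : ℂ) (_ : μ ≠ (c : ℂ)),
        Module.End.eigenspace (LieAlgebra.ad ℂ L h) μ := by
      refine (iSup_le fun j => iSup_le fun hj => ?_ :
        (⨆ (j) (_ : j ≠ c), Lg j) ≤ _) hb
      have h1 : Lg j ≤ Module.End.eigenspace (LieAlgebra.ad ℂ L h) (j : ℂ) := fun x hx =>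
        Module.End.mem_eigenspace_iff.mpr (by simpa [LieAlgebra.ad_apply] using hLg j x hx)
      refine le_trans h1 ?_
      exact le_iSup₂ (f := fun (μ : ℂ) (_ : μ ≠ (c : ℂ)) =>
        Module.End.eigenspace (LieAlgebra.ad ℂ L h) μ) (j : ℂ)
        (by exact_mod_cast hj)
    have hb0 : b = 0 := by
      have hd := (Module.End.eigenspaces_iSupIndep (LieAlgebra.ad ℂ L h)) (c : ℂ)
      simpa using hd.le_bot (Submodule.mem_inf.mpr ⟨hb1, hb2⟩)
    rw [← hab, hb0, add_zero]; exact ha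
  -- degree shift of ad f
  have deg_shift : ∀ (j : ℤ) (x : L), x ∈ Lg j → ⁅f, x⁆ ∈ Lg (j - 2) := by
    intro j x hx
    have hl := leibniz_lie h f x
    rw [hhf, hLg j x hx, smul_lie, lie_smul] at hl
    refine eig_mem (j - 2) _ ?_
    rw [hl]; push_cast; module
  -- single-degree orthogonality
  have orth1 : ∀ (j k : ℤ), j + k ≠ 0 → ∀ x ∈ Lg j, ∀ y ∈ Lg k, B x y = 0 := by
    intro j k hjk x hx y hy
    have e1 : B x ⁅h, y⁆ = - (B ⁅h, x⁆ y) := by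
      rw [← hBinv x h y, ← lie_skew h x, map_neg, LinearMap.neg_apply, neg_neg]
    rw [hLg k y hy, hLg j x hx, map_smul, LinearMap.map_smul₂] at e1
    have e2 : ((j : ℂ) + k) * B x y = 0 := by
      have := e1
      simp only [smul_eq_mul, LinearMap.smul_apply] at this
      linear_combination this
    rcases mul_eq_zero.mp e2 with h0 | h0
    · exfalso; apply hjk; exact_mod_cast h0
    · exact h0
  -- orthogonality of graded sups
  have orthS : ∀ (P Q : ℤ → Prop), (∀ j k, P j → Q k → j + k ≠ 0) →
      ∀ x ∈ (⨆ j : {j : ℤ // P j}, Lg j), ∀ y ∈ (⨆ k : {k : ℤ // Q k}, Lg k), B x y = 0 := by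
    intro P Q hPQ x hx y hy
    have step : ∀ (j : ℤ), P j → ∀ x' ∈ Lg j, B x' y = 0 := by
      intro j hj x' hx'
      have hker : (⨆ k : {k : ℤ // Q k}, Lg k) ≤ LinearMap.ker (B x') := by
        refine iSup_le fun k => ?_
        intro z hz
        exact LinearMap.mem_ker.mpr (orth1 j k (hPQ j k hj k.2) x' hx' z hz)
      exact LinearMap.mem_ker.mp (hker hy)
    have hker : (⨆ j : {j : ℤ // P j}, Lg j) ≤ LinearMap.ker (B.flip y) := by
      refine iSup_le fun j => ?_
      intro z hz
      refine LinearMap.mem_ker.mpr ?_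
      simpa [LinearMap.flip_apply] using step j j.2 z hz
    simpa [LinearMap.flip_apply] using LinearMap.mem_ker.mp (hker hx)
  -- splitting of L along a cover of ℤ by two predicates
  have split : ∀ (P Q : ℤ → Prop), (∀ j, P j ∨ Q j) → ∀ x : L,
      ∃ a ∈ (⨆ j : {j : ℤ // P j}, Lg j), ∃ b ∈ (⨆ j : {j : ℤ // Q j}, Lg j), x = a + b := by
    intro P Q hPQ x
    have hle : (⊤ : Submodule ℂ L) ≤
        (⨆ j : {j : ℤ // P j}, Lg j) ⊔ (⨆ j : {j : ℤ // Q j}, Lg j) := by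
      rw [← htop]
      refine iSup_le fun j => ?_
      rcases hPQ j with hj | hj
      · exact le_sup_of_le_left (le_iSup (fun j : {j : ℤ // P j} => Lg j) ⟨j, hj⟩)
      · exact le_sup_of_le_right (le_iSup (fun j : {j : ℤ // Q j} => Lg j) ⟨j, hj⟩)
    obtain ⟨a, ha, b, hb, hab⟩ := Submodule.mem_sup.mp (hle (show x ∈ (⊤ : Submodule ℂ L) from Submodule.mem_top))
    exact ⟨a, ha, b, hb, hab.symm⟩
  -- (D) nondegeneracy on low part against n
  have keyD : ∀ w ∈ (⨆ j : {j : ℤ // j ≤ -1}, Lg j), (∀ u ∈ n, B u w = 0) → w = 0 := by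
    intro w hw hu
    apply hBnd
    intro y
    obtain ⟨a, ha, b, hb, hy⟩ :=
      split (fun j => 1 ≤ j) (fun j => j ≤ 0) (fun j => by omega) y
    have h1 : B w a = 0 := by rw [hBsymm]; exact hu a (by rw [hn]; exact ha)
    have h2 : B w b = 0 :=
      orthS (fun j => j ≤ -1) (fun k => k ≤ 0) (fun j k hj hk => by omega) w hw b hb
    rw [hy, map_add, h1, h2, add_zero]
  -- ad f maps p into the low part
  have fp_low : ∀ x ∈ p, ⁅f, x⁆ ∈ (⨆ j : {j : ℤ // j ≤ -1}, Lg j) := by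
    intro x hx
    rw [hp] at hx
    have hle : (⨆ j : {j : ℤ // j ≤ 1}, Lg j) ≤
        Submodule.comap (LieAlgebra.ad ℂ L f) (⨆ j : {j : ℤ // j ≤ -1}, Lg j) := by
      refine iSup_le fun j => ?_
      intro z hz
      have h1 : ⁅f, z⁆ ∈ Lg ((j : ℤ) - 2) := deg_shift j z hz
      have h2 : Lg ((j : ℤ) - 2) ≤ ⨆ k : {k : ℤ // k ≤ -1}, Lg k :=
        le_iSup (fun k : {k : ℤ // k ≤ -1} => Lg k) ⟨(j : ℤ) - 2, by have := j.2; omega⟩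
      simp only [Submodule.mem_comap, LieAlgebra.ad_apply]
      exact h2 h1
    simpa [Submodule.mem_comap, LieAlgebra.ad_apply] using hle hx
  -- ad f maps m into the nonnegative part
  have fm_nonneg : ∀ x ∈ m, ⁅f, x⁆ ∈ (⨆ j : {j : ℤ // 0 ≤ j}, Lg j) := by
    intro x hx
    rw [hm] at hx
    have hle : (⨆ j : {j : ℤ // 2 ≤ j}, Lg j) ≤
        Submodule.comap (LieAlgebra.ad ℂ L f) (⨆ j : {j : ℤ // 0 ≤ j}, Lg j) := by
      refine iSup_le fun j => ?_
      intro z hz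
      have h1 : ⁅f, z⁆ ∈ Lg ((j : ℤ) - 2) := deg_shift j z hz
      have h2 : Lg ((j : ℤ) - 2) ≤ ⨆ k : {k : ℤ // 0 ≤ k}, Lg k :=
        le_iSup (fun k : {k : ℤ // 0 ≤ k} => Lg k) ⟨(j : ℤ) - 2, by have := j.2; omega⟩
      simp only [Submodule.mem_comap, LieAlgebra.ad_apply]
      exact h2 h1
    simpa [Submodule.mem_comap, LieAlgebra.ad_apply] using hle hx
  -- (B) the centralizer of f is contained in p
  have kerp : ∀ x : L, ⁅f, x⁆ = 0 → x ∈ p := by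
    intro x hfx
    obtain ⟨a, ha, b, hb, hx⟩ :=
      split (fun j => j ≤ 1) (fun j => 2 ≤ j) (fun j => by omega) x
    have hbm : b ∈ m := by rw [hm]; exact hb
    have hap : a ∈ p := by rw [hp]; exact ha
    have hfb_eq : ⁅f, b⁆ = -⁅f, a⁆ := by
      have hz : ⁅f, a⁆ + ⁅f, b⁆ = 0 := by rw [← lie_add, ← hx, hfx]
      exact eq_neg_of_add_eq_zero_right hz
    have hw1 : ⁅f, b⁆ ∈ ⨆ j : {j : ℤ // j ≤ -1}, Lg j := by
      rw [hfb_eq]; exact neg_mem (fp_low a hap)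
    have hw2 : ⁅f, b⁆ ∈ ⨆ j : {j : ℤ // 0 ≤ j}, Lg j := fm_nonneg b hbm
    have hborth : ∀ u ∈ n, B u ⁅f, b⁆ = 0 := by
      intro u hun
      rw [hn] at hun
      exact orthS (fun j => 1 ≤ j) (fun k => 0 ≤ k) (fun j k hj hk => by omega) u hun _ hw2
    have hfb0 : ⁅f, b⁆ = 0 := keyD _ hw1 hborth
    have hbn : b ∈ n := by
      rw [hn]
      have : (⨆ j : {j : ℤ // 2 ≤ j}, Lg j) ≤ ⨆ j : {j : ℤ // 1 ≤ j}, Lg j :=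
        iSup_le fun j => le_iSup (fun j : {j : ℤ // 1 ≤ j} => Lg j) ⟨j, by have := j.2; omega⟩
      exact this hb
    have hb0 : b = 0 := hinj b hbn hfb0
    rw [hx, hb0, add_zero]; exact hap
  -- key membership criterion for the centralizer
  have kermem : ∀ x ∈ p, (∀ i ∉ J, B (v i) x = 0) → ⁅f, x⁆ = 0 := by
    intro x hxp hxo
    apply keyD _ (fp_low x hxp)
    intro u hun
    have e1 : B u ⁅f, x⁆ = B ⁅u, f⁆ x := (hBinv u f x).symm
    have e2 : B ⁅u, f⁆ x = - B ⁅f, u⁆ x := by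
      rw [← lie_skew f u, map_neg, LinearMap.neg_apply, neg_neg]
    have hfu : ⁅f, u⁆ ∈ Submodule.span ℂ (v '' Jᶜ) := by
      rw [hvJc_span]
      exact ⟨u, hun, by simp [LieAlgebra.ad_apply]⟩
    have hz : B ⁅f, u⁆ x = 0 := by
      have hle : Submodule.span ℂ (v '' Jᶜ) ≤ LinearMap.ker (B.flip x) := by
        rw [Submodule.span_le]
        rintro _ ⟨i, hi, rfl⟩
        exact LinearMap.mem_ker.mpr (by simpa [LinearMap.flip_apply] using hxo i hi)
      simpa [LinearMap.flip_apply] using LinearMap.mem_ker.mp (hle hfu)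
    rw [e1, e2, hz, neg_zero]
  constructor
  · exact hvd_li.comp _ Subtype.val_injective
  · apply le_antisymm
    · rw [Submodule.span_le]
      rintro _ ⟨i, hiJ, rfl⟩
      have hfz : ⁅f, vd i⁆ = 0 := by
        refine kermem (vd i) (hvd_mem i) fun k hk => ?_
        rw [hdual k i, if_neg]
        exact fun hki => hk (hki ▸ hiJ)
      exact LinearMap.mem_ker.mpr (by simpa [LieAlgebra.ad_apply] using hfz)
    · intro x hx
      have hfx : ⁅f, x⁆ = 0 := by
        simpa [LieAlgebra.ad_apply] using LinearMap.mem_ker.mp hx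
      have hxp : x ∈ p := kerp x hfx
      rw [← hvd_span] at hxp
      obtain ⟨c, hc⟩ := (Submodule.mem_span_range_iff_exists_fun ℂ).mp hxp
      have hcoef : ∀ k, B (v k) x = c k := by
        intro k
        rw [← hc, map_sum]
        simp [hdual, Finset.sum_ite_eq]
      have hzero : ∀ k ∉ J, c k = 0 := by
        intro k hk
        rw [← hcoef k]
        obtain ⟨u, hun, hu⟩ := hvJc k hk
        have hvk : v k = ⁅f, u⁆ := by rw [← hu]; simp [LieAlgebra.ad_apply]
        have e2 : B ⁅f, u⁆ x = - B ⁅u, f⁆ x := by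
          rw [← lie_skew u f, map_neg, LinearMap.neg_apply, neg_neg]
        rw [hvk, e2, hBinv u f x, hfx, map_zero, neg_zero]
      rw [← hc]
      apply Submodule.sum_mem
      intro i _
      by_cases hi : i ∈ J
      · exact Submodule.smul_mem _ _ (Submodule.subset_span ⟨i, hi, rfl⟩)
      · rw [hzero i hi, zero_smul]; exact Submodule.zero_mem _
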